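/- (Latent-variable reformulation of kinematic inseparability.) Fix a PMF u on X×A with u(x,a) > 0 for all (x,a), and contexts x₁, x₂ ∈ X. Then: (a) P(x|x₁,a) = P(x|x₂,a) for all (x,a) ∈ X×A if and only if p(s|f(x₁),a) = p(s|f(x₂),a) for all (s,a) ∈ S×A; and (b) P^{bwd}(x,a|x₁) = P^{bwd}(x,a|x₂) for all (x,a) ∈ X×A if and only if p(f(x₁)|s,a) / Σ_{(x',a')∈X×A} p(f(x₁)|f(x'),a')·u(x',a') = p(f(x₂)|s,a) / Σ_{(x',a')∈X×A} p(f(x₂)|f(x'),a')·u(x',a') for all (s,a) ∈ S×A. -/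
import Mathlib


open Finset

/-- `μ` is a probability mass function on the finite type `Z`. -/
def IsPMF {Z : Type*} [Fintype Z] (μ : Z → ℝ) : Prop :=
  (∀ z, 0 ≤ μ z) ∧ ∑ z, μ z = 1

/-- Context transition kernel of a Block MDP: `ctxKer f p q x a y = P(y|x,a) =
q(y|f(y))·p(f(y)|f(x),a)`, where `p s a s' = p(s'|s,a)` and `q s y = q(y|s)`. -/
def ctxKer {X S A : Type*} (f : X → S) (p : S → A → S → ℝ) (q : S → X → ℝ)
    (x : X) (a : A) (y : X) : ℝ :=
  q (f y) y * p (f x) a (f y)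

/-- Context backward transition kernel:
`ctxBwd f p q u x a y = P^{bwd}(x,a|y) = P(y|x,a)·u(x,a) / Σ_{x',a'} P(y|x',a')·u(x',a')`. -/
noncomputable def ctxBwd {X S A : Type*} [Fintype X] [Fintype A]
    (f : X → S) (p : S → A → S → ℝ) (q : S → X → ℝ) (u : X × A → ℝ)
    (x : X) (a : A) (y : X) : ℝ :=
  ctxKer f p q x a y * u (x, a) / ∑ t : X × A, ctxKer f p q t.1 t.2 y * u t

/-- **Latent-variable reformulation of kinematic inseparability.**
Part (a): equality of the forward kernels out of `x₁` and `x₂` is equivalent to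
equality of the latent forward transitions from `f(x₁)` and `f(x₂)`.
Part (b): equality of the backward kernels into `x₁` and `x₂` is equivalent to the
latent backward condition (C2'). -/
theorem kinematic_inseparability_latent_reformulation
    {X S A : Type*} [Fintype X] [Fintype S] [Fintype A]
    (f : X → S) (hf : Function.Surjective f)
    (p : S → A → S → ℝ) (hp : ∀ s a, (∀ s', 0 < p s a s') ∧ ∑ s', p s a s' = 1)
    (q : S → X → ℝ)
    (hq : ∀ s, (∀ y, 0 ≤ q s y) ∧ (∀ y, f y ≠ s → q s y = 0) ∧ ∑ y, q s y = 1)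
    (hqpos : ∀ x, 0 < q (f x) x)
    (u : X × A → ℝ) (hu : IsPMF u) (hupos : ∀ t, 0 < u t)
    (x₁ x₂ : X) :
    ((∀ (x : X) (a : A), ctxKer f p q x₁ a x = ctxKer f p q x₂ a x) ↔
      ∀ (s : S) (a : A), p (f x₁) a s = p (f x₂) a s)
    ∧
    ((∀ (x : X) (a : A), ctxBwd f p q u x a x₁ = ctxBwd f p q u x a x₂) ↔
      ∀ (s : S) (a : A),
        p s a (f x₁) / (∑ t : X × A, p (f t.1) t.2 (f x₁) * u t)
          = p s a (f x₂) / (∑ t : X × A, p (f t.1) t.2 (f x₂) * u t)) := by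
  -- positivity of the latent denominators
  have hEpos : ∀ z : X, 0 < ∑ t : X × A, p (f t.1) t.2 (f z) * u t := by
    intro z
    apply Finset.sum_pos
    · intro t _
      exact mul_pos ((hp (f t.1) t.2).1 (f z)) (hupos t)
    · rcases (Finset.univ : Finset (X × A)).eq_empty_or_nonempty with he | hne
      · exfalso; have := hu.2; rw [he, Finset.sum_empty] at this; norm_num at this
      · exact hne
  constructor
  · constructor
    · intro h s a
      obtain ⟨x, rfl⟩ := hf s
      have := h x a
      simp only [ctxKer] at this
      exact mul_left_cancel₀ (ne_of_gt (hqpos x)) this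
    · intro h x a
      simp only [ctxKer, h (f x) a]
  · -- rewrite ctxBwd into latent form
    have key : ∀ (z x : X) (a : A),
        ctxBwd f p q u x a z
          = p (f x) a (f z) * u (x, a) / ∑ t : X × A, p (f t.1) t.2 (f z) * u t := by
      intro z x a
      have hsum : (∑ t : X × A, ctxKer f p q t.1 t.2 z * u t)
          = q (f z) z * ∑ t : X × A, p (f t.1) t.2 (f z) * u t := by
        rw [Finset.mul_sum]
        refine Finset.sum_congr rfl fun t _ => ?_
        simp only [ctxKer]; ring
      simp only [ctxBwd]
      rw [hsum]
      simp only [ctxKer]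
      rw [mul_assoc, mul_div_mul_left _ _ (ne_of_gt (hqpos z))]
    constructor
    · intro h s a
      obtain ⟨x, rfl⟩ := hf s
      have := h x a
      rw [key x₁ x a, key x₂ x a, mul_div_right_comm, mul_div_right_comm] at this
      exact mul_right_cancel₀ (ne_of_gt (hupos (x, a))) this
    · intro h x a
      rw [key x₁ x a, key x₂ x a, mul_div_right_comm, mul_div_right_comm, h (f x) a]
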